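/- arXiv:1503.00914 — 4 statements merged into one kernel-verified Lean document; each statement's English description precedes it below -/
import Mathlib

section
/- A sequence (a_1,...,a_n) of nonnegative integers is a primitive p-ascent sequence avoiding the pattern 10 if and only if 0 = a_1 < a_2 < ... < a_n and a_i ≤ p + i - 2 for all 2 ≤ i ≤ n. -/
/-- Number of ascents of a sequence: indices j with a_j < a_{j+1}. -/
def ascN (l : List ℕ) : ℕ := (l.zip l.tail).countP (fun q => decide (q.1 < q.2))

/-- `a` is a p-ascent sequence: nonempty, starts with 0, and each later entry
is at most `p` plus the number of ascents of the preceding prefix. -/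
def IsPAsc (p : ℕ) (a : List ℕ) : Prop :=
  a.head? = some 0 ∧ ∀ i : Fin a.length, 1 ≤ i.val → a.get i ≤ p + ascN (a.take i.val)

def Avoids01 (a : List ℕ) : Prop := ∀ i j : Fin a.length, i < j → ¬ a.get i < a.get j

def Avoids10 (a : List ℕ) : Prop := ∀ i j : Fin a.length, i < j → ¬ a.get j < a.get i

def Avoids012 (a : List ℕ) : Prop :=
  ∀ i j k : Fin a.length, i < j → j < k → ¬ (a.get i < a.get j ∧ a.get j < a.get k)

/-- primitive: no two equal consecutive letters -/
def Primitive (a : List ℕ) : Prop := a.Chain' (· ≠ ·)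

lemma ascN_chain (l : List ℕ) (h : l.Chain' (· < ·)) : ascN l = l.length - 1 := by
  induction l with
  | nil => rfl
  | cons x t ih =>
    cases t with
    | nil => rfl
    | cons y s =>
      have h' := (List.isChain_cons_cons.mp h)
      have := ih h'.2
      simp only [ascN, List.zip, List.tail] at this ⊢
      simp [List.countP_cons, h'.1, this]

theorem stmt3 (p : ℕ) (hp : 1 ≤ p) (a : List ℕ) (ha : a ≠ []) :
    (IsPAsc p a ∧ Primitive a ∧ Avoids10 a) ↔
      (a.head? = some 0 ∧ a.Chain' (· < ·) ∧
        ∀ i : Fin a.length, 1 ≤ i.val → a.get i ≤ p + i.val - 1) := by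
  constructor
  · rintro ⟨⟨h0, hb⟩, hprim, hav⟩
    have hchain : a.Chain' (· < ·) := by
      rw [Primitive, List.Chain', List.isChain_iff_getElem] at hprim; rw [List.Chain', List.isChain_iff_getElem]
      intro i hi
      refine lt_of_le_of_ne ?_ (hprim i hi)
      have := hav ⟨i, by omega⟩ ⟨i+1, by omega⟩ (by simp)
      simp only [List.get_eq_getElem] at this
      omega
    refine ⟨h0, hchain, fun i hi => ?_⟩
    have ht : (a.take i.val).Chain' (· < ·) := hchain.sublist (List.take_sublist _ _)
    have := hb i hi
    rw [ascN_chain _ ht, List.length_take] at this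
    have hi2 : i.val ≤ a.length := le_of_lt i.isLt
    omega
  · rintro ⟨h0, hchain, hb⟩
    have hpw : a.Pairwise (· < ·) := List.isChain_iff_pairwise.mp hchain
    refine ⟨⟨h0, fun i hi => ?_⟩, hchain.imp (fun _ _ h => ne_of_lt h), fun i j hij => ?_⟩
    · have ht : (a.take i.val).Chain' (· < ·) := hchain.sublist (List.take_sublist _ _)
      rw [ascN_chain _ ht, List.length_take]
      have := hb i hi
      have hi2 : i.val ≤ a.length := le_of_lt i.isLt
      omega
    · have := List.pairwise_iff_get.mp hpw i j hij
      omega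
end

section
/- For all n ≥ 1, the number of 3-ascent sequences of length n with pairwise distinct entries equals C(n+1, 2) + 2·C(n, 3) + C(n-1, 4) + C(n+2, 5). -/
def allowedF (b : List ℕ) : Finset ℕ := (Finset.range (4 + ascN b)).filter (fun v => v ∉ b)

def seqsF : ℕ → Finset (List ℕ)
  | 0 => {[0]}
  | (k+1) => (seqsF k).biUnion (fun b => (allowedF b).image (fun v => b ++ [v]))

def rkF (b : List ℕ) : ℕ := ((allowedF b).filter (fun u => u < b.getLastD 0)).card
def ckF (b : List ℕ) : ℕ := (allowedF b).card
def idxF (b : List ℕ) (v : ℕ) : ℕ := ((allowedF b).filter (fun u => u < v)).card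
def cnt (k c r : ℕ) : ℕ := ((seqsF k).filter (fun b => ckF b = c ∧ rkF b = r)).card
def okState (c r : ℕ) : Prop := (c = 3 ∧ r ≤ 2) ∨ (c = 2 ∧ r ≤ 1) ∨ (c = 1 ∧ r = 0)

lemma ascN_cons_cons (x y : ℕ) (l : List ℕ) :
    ascN (x :: y :: l) = (if x < y then 1 else 0) + ascN (y :: l) := by
  simp only [ascN, List.tail_cons, List.zip_cons_cons, List.countP_cons]
  by_cases h : x < y <;> simp [h] <;> omega

lemma ascN_append_single (b : List ℕ) (hb : b ≠ []) (v : ℕ) :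
    ascN (b ++ [v]) = ascN b + (if b.getLastD 0 < v then 1 else 0) := by
  induction b with
  | nil => simp at hb
  | cons x xs ih =>
    cases xs with
    | nil =>
      simp only [ascN, List.nil_append, List.cons_append]
      by_cases h : x < v <;> simp [h]
    | cons y t =>
      simp only [List.cons_append, ascN_cons_cons]
      have := ih (by simp)
      simp only [List.cons_append] at this
      rw [this]
      simp [List.getLastD_cons]
      omega

lemma ascN_le_append (b : List ℕ) (hb : b ≠ []) (v : ℕ) : ascN b ≤ ascN (b ++ [v]) := by
  rw [ascN_append_single b hb v]; omega

lemma seqs_spec : ∀ k, ∀ b ∈ seqsF k,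
    b.length = k + 1 ∧ IsPAsc 3 b ∧ b.Nodup ∧ (∀ x ∈ b, x < 4 + ascN b) := by
  intro k
  induction k with
  | zero =>
    intro b hb
    simp [seqsF] at hb
    subst hb
    refine ⟨rfl, ⟨rfl, ?_⟩, by simp, by simp [ascN]⟩
    intro i hi
    have h1 : i.val < 1 := by simpa using i.isLt
    omega
  | succ k ih =>
    intro a ha
    simp only [seqsF, Finset.mem_biUnion, Finset.mem_image] at ha
    obtain ⟨b, hb, v, hv, rfl⟩ := ha
    obtain ⟨hlen, hpasc, hnd, hbd⟩ := ih b hb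
    have hbne : b ≠ [] := by intro h; simp [h] at hlen
    have hvlt : v < 4 + ascN b := by
      simp [allowedF, Finset.mem_filter, Finset.mem_range] at hv; exact hv.1
    have hvnb : v ∉ b := by
      simp [allowedF, Finset.mem_filter] at hv; exact hv.2
    have hmono : ascN b ≤ ascN (b ++ [v]) := ascN_le_append b hbne v
    refine ⟨by simp [hlen], ⟨?_, ?_⟩, ?_, ?_⟩
    · rw [List.head?_append_of_ne_nil _ hbne] -- maybe wrong name
      exact hpasc.1
    · intro i hi
      rcases lt_or_eq_of_le (Nat.lt_succ_iff.mp (by simpa using i.isLt)) with hlt | heq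
      · -- i.val < b.length
        have hget : (b ++ [v]).get i = b.get ⟨i.val, hlt⟩ := by
          simp [List.get_eq_getElem]
          rw [List.getElem_append_left hlt]
        have htake : (b ++ [v]).take i.val = b.take i.val := by
          rw [List.take_append_of_le_length (le_of_lt hlt)]
        rw [hget, htake]
        exact hpasc.2 ⟨i.val, hlt⟩ hi
      · -- i.val = b.length
        have hget : (b ++ [v]).get i = v := by
          simp [List.get_eq_getElem, heq, List.getElem_append_right]
        have htake : (b ++ [v]).take i.val = b := by
          rw [heq, List.take_left]
        rw [hget, htake]
        omega
    · simp [List.nodup_append, hnd, hvnb]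
      intro a ha h; subst h; exact hvnb ha
    · intro x hx
      rcases List.mem_append.mp hx with h | h
      · exact lt_of_lt_of_le (hbd x h) (by omega)
      · simp at h; subst h; omega

lemma mem_seqs_of_good : ∀ k, ∀ a : List ℕ, a.length = k + 1 → IsPAsc 3 a → a.Nodup →
    a ∈ seqsF k := by
  intro k
  induction k with
  | zero =>
    intro a hlen hpasc _
    match a, hlen with
    | [x], _ =>
      have : x = 0 := by simpa using hpasc.1
      subst this
      simp [seqsF]
  | succ k ih =>
    intro a hlen hpasc hnd
    have hane : a ≠ [] := by intro h; simp [h] at hlen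
    set b := a.dropLast with hbdef
    set v := a.getLast hane with hvdef
    have hsplit : b ++ [v] = a := List.dropLast_append_getLast hane
    have hblen : b.length = k + 1 := by
      simp [hbdef, List.length_dropLast, hlen]
    have hbne : b ≠ [] := by intro h; simp [h] at hblen
    have hbmem : b ∈ seqsF k := by
      apply ih b hblen
      · constructor
        · rw [← hsplit] at hpasc
          have := hpasc.1
          rwa [List.head?_append_of_ne_nil _ hbne] at this
        · intro i hi
          have hlt : i.val < b.length := i.isLt
          have hlt' : i.val < a.length := by omega
          have h2 := hpasc.2 ⟨i.val, hlt'⟩ hi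
          have hget : a.get ⟨i.val, hlt'⟩ = b.get i := by
            simp only [List.get_eq_getElem]
            rw [List.getElem_of_eq hsplit.symm hlt', List.getElem_append_left hlt]
          have htake : a.take i.val = b.take i.val := by
            conv_lhs => rw [← hsplit]
            rw [List.take_append_of_le_length (le_of_lt hlt)]
          rw [hget, htake] at h2
          exact h2
      · rw [← hsplit] at hnd
        exact (List.nodup_append.mp hnd).1
    have hvmem : v ∈ allowedF b := by
      have hlt' : k + 1 < a.length := by omega
      have h2 := hpasc.2 ⟨k + 1, hlt'⟩ (by simp)
      have hget : a.get ⟨k + 1, hlt'⟩ = v := by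
        simp only [List.get_eq_getElem]
        rw [List.getElem_of_eq hsplit.symm hlt',
          List.getElem_append_right (by omega : b.length ≤ k + 1)]
        simp [hblen]
      have htake : a.take (k + 1) = b := by
        conv_lhs => rw [← hsplit]
        rw [← hblen, List.take_left]
      rw [hget, htake] at h2
      have hvnb : v ∉ b := by
        rw [← hsplit] at hnd
        have := List.nodup_append'.mp hnd
        intro hmem
        exact this.2.2 hmem (by simp)
      simp [allowedF, Finset.mem_filter, Finset.mem_range]
      exact ⟨by omega, hvnb⟩
    rw [← hsplit]
    simp only [seqsF, Finset.mem_biUnion, Finset.mem_image]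
    exact ⟨b, hbmem, v, hvmem, rfl⟩

section Trans
variable {b : List ℕ} {v : ℕ}
variable (hbne : b ≠ []) (hbd : ∀ x ∈ b, x < 4 + ascN b) (hv : v ∈ allowedF b)

lemma getLastD_mem' : ∀ (l : List ℕ) (d : ℕ), l ≠ [] → l.getLastD d ∈ l := by
  intro l
  induction l with
  | nil => simp
  | cons x xs ih =>
    intro d _
    cases xs with
    | nil => simp
    | cons y t =>
      rw [List.getLastD_cons]
      exact List.mem_cons_of_mem x (ih x (by simp))

lemma getLastD_mem (h : b ≠ []) : b.getLastD 0 ∈ b := getLastD_mem' b 0 h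

include hbne hbd hv

lemma hvlt' : v < 4 + ascN b := by
  have := hv; simp [allowedF, Finset.mem_filter, Finset.mem_range] at this; exact this.1

lemma hvnb' : v ∉ b := by
  have := hv; simp [allowedF, Finset.mem_filter] at this; exact this.2

lemma allowed_append :
    allowedF (b ++ [v]) = if b.getLastD 0 < v
      then insert (4 + ascN b) ((allowedF b).erase v)
      else (allowedF b).erase v := by
  have hvl := hvlt' hbne hbd hv
  have hvn := hvnb' hbne hbd hv
  by_cases h : b.getLastD 0 < v <;>
  · simp only [h, if_true, if_false]
    ext x
    simp only [allowedF, ascN_append_single b hbne v, h, if_true, if_false,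
      Finset.mem_insert, Finset.mem_erase, Finset.mem_filter, Finset.mem_range,
      List.mem_append, List.mem_singleton]
    constructor
    · rintro ⟨h1, h2⟩
      push_neg at h2
      first
      | (rcases eq_or_ne x (4 + ascN b) with rfl | hne
         · exact Or.inl rfl
         · exact Or.inr ⟨h2.2, by omega, h2.1⟩)
      | exact ⟨h2.2, by omega, h2.1⟩
    · first
      | (rintro (rfl | ⟨hne, hlt, hnb⟩)
         · exact ⟨by omega, by push_neg; exact ⟨fun hc => absurd (hbd _ hc) (by omega), by omega⟩⟩
         · exact ⟨by omega, by push_neg; exact ⟨hnb, hne⟩⟩)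
      | (rintro ⟨hne, hlt, hnb⟩
         exact ⟨by omega, by push_neg; exact ⟨hnb, hne⟩⟩)

lemma ck_append :
    ckF (b ++ [v]) = if b.getLastD 0 < v then ckF b else ckF b - 1 := by
  have hvl := hvlt' hbne hbd hv
  have hB : (4 + ascN b) ∉ (allowedF b).erase v := by
    intro hc
    have := Finset.mem_of_mem_erase hc
    simp [allowedF, Finset.mem_filter, Finset.mem_range] at this
  have hcard : ((allowedF b).erase v).card = ckF b - 1 :=
    Finset.card_erase_of_mem hv
  have hck1 : 1 ≤ ckF b := Finset.card_pos.mpr ⟨v, hv⟩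
  rw [ckF, allowed_append hbne hbd hv]
  by_cases h : b.getLastD 0 < v
  · rw [if_pos h, if_pos h, Finset.card_insert_of_notMem hB, hcard]
    have hck1 : 1 ≤ ckF b := Finset.card_pos.mpr ⟨v, hv⟩
    omega
  · rw [if_neg h, if_neg h, hcard]

lemma rk_append : rkF (b ++ [v]) = idxF b v := by
  have hvl := hvlt' hbne hbd hv
  rw [rkF, allowed_append hbne hbd hv, List.getLastD_concat]
  have herase : ((allowedF b).erase v).filter (fun u => u < v)
      = (allowedF b).filter (fun u => u < v) := by
    ext x
    simp only [Finset.mem_filter, Finset.mem_erase]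
    constructor
    · rintro ⟨⟨_, h2⟩, h3⟩; exact ⟨h2, h3⟩
    · rintro ⟨h1, h2⟩; exact ⟨⟨by omega, h1⟩, h2⟩
  by_cases h : b.getLastD 0 < v <;> simp only [h, if_true, if_false]
  · rw [Finset.filter_insert]
    rw [if_neg (by omega), herase]
    rfl
  · rw [herase]; rfl

lemma desc_iff : b.getLastD 0 < v ↔ ¬ (idxF b v < rkF b) := by
  have hvn := hvnb' hbne hbd hv
  have hLmem := getLastD_mem hbne
  have hne : v ≠ b.getLastD 0 := fun h => hvn (h ▸ hLmem)
  constructor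
  · intro h hc
    have hsub : (allowedF b).filter (fun u => u < b.getLastD 0)
        ⊆ (allowedF b).filter (fun u => u < v) := by
      intro x hx
      simp only [Finset.mem_filter] at *
      exact ⟨hx.1, by omega⟩
    have h2 : rkF b ≤ idxF b v := Finset.card_le_card hsub
    omega
  · intro h
    rcases lt_trichotomy v (b.getLastD 0) with hlt | heq | hgt
    · exfalso
      apply h
      have hss : (allowedF b).filter (fun u => u < v)
          ⊂ (allowedF b).filter (fun u => u < b.getLastD 0) := by
        constructor
        · intro x hx
          simp only [Finset.mem_filter] at *
          exact ⟨hx.1, by omega⟩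
        · intro hc
          have : v ∈ (allowedF b).filter (fun u => u < v) := by
            apply hc
            simp only [Finset.mem_filter]
            exact ⟨hv, hlt⟩
          simp at this
      exact Finset.card_lt_card hss
    · exact absurd heq hne
    · exact hgt

lemma idx_lt_ck : idxF b v < ckF b := by
  have hck1 : 1 ≤ ckF b := Finset.card_pos.mpr ⟨v, hv⟩
  have hsub : (allowedF b).filter (fun u => u < v) ⊆ (allowedF b).erase v := by
    intro x hx
    simp only [Finset.mem_filter] at hx
    exact Finset.mem_erase.mpr ⟨by omega, hx.1⟩
  have := Finset.card_le_card hsub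
  rw [Finset.card_erase_of_mem hv] at this
  rw [idxF, ckF] at *
  omega

end Trans

lemma idx_strictMono {b : List ℕ} {u w : ℕ} (hu : u ∈ allowedF b)
    (huw : u < w) : idxF b u < idxF b w := by
  apply Finset.card_lt_card
  constructor
  · intro x hx
    simp only [Finset.mem_filter] at *
    exact ⟨hx.1, by omega⟩
  · intro hc
    have : u ∈ (allowedF b).filter (fun x => x < u) := hc (by simp [Finset.mem_filter, hu, huw])
    simp at this

lemma idx_inj {b : List ℕ} {u w : ℕ} (hu : u ∈ allowedF b) (hw : w ∈ allowedF b)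
    (h : idxF b u = idxF b w) : u = w := by
  rcases lt_trichotomy u w with hlt | heq | hgt
  · exact absurd h (Nat.ne_of_lt (idx_strictMono hu hlt))
  · exact heq
  · exact absurd h.symm (Nat.ne_of_lt (idx_strictMono hw hgt))

lemma fiber_card {b : List ℕ} (hbne : b ≠ []) (hbd : ∀ x ∈ b, x < 4 + ascN b) (j : ℕ) :
    ((allowedF b).filter (fun v => idxF b v = j)).card = if j < ckF b then 1 else 0 := by
  by_cases hj : j < ckF b
  · rw [if_pos hj]
    have himg : (allowedF b).image (fun v => idxF b v) = Finset.range (ckF b) := by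
      apply Finset.eq_of_subset_of_card_le
      · intro x hx
        simp only [Finset.mem_image] at hx
        obtain ⟨v, hv, rfl⟩ := hx
        exact Finset.mem_range.mpr (idx_lt_ck hbne hbd hv)
      · rw [Finset.card_range, Finset.card_image_of_injOn (fun u hu w hw h => idx_inj hu hw h)]
        exact Nat.le_of_eq rfl
    have : j ∈ (allowedF b).image (fun v => idxF b v) := by
      rw [himg]; exact Finset.mem_range.mpr hj
    simp only [Finset.mem_image] at this
    obtain ⟨v, hv, hvj⟩ := this
    rw [Finset.card_eq_one]
    refine ⟨v, ?_⟩
    ext w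
    simp only [Finset.mem_filter, Finset.mem_singleton]
    constructor
    · rintro ⟨hw, hwj⟩
      exact idx_inj hw hv (hwj.trans hvj.symm)
    · rintro rfl
      exact ⟨hv, hvj⟩
  · rw [if_neg hj]
    rw [Finset.card_eq_zero]
    apply Finset.filter_eq_empty_iff.mpr
    intro v hvmem hc
    exact hj (hc ▸ idx_lt_ck hbne hbd hvmem)

lemma seqs_ne (k : ℕ) {b : List ℕ} (hb : b ∈ seqsF k) : b ≠ [] := by
  intro h
  have := (seqs_spec k b hb).1
  simp [h] at this

lemma seqs_bd (k : ℕ) {b : List ℕ} (hb : b ∈ seqsF k) : ∀ x ∈ b, x < 4 + ascN b :=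
  (seqs_spec k b hb).2.2.2

/-- new state of an extension -/
lemma state_append {k : ℕ} {b : List ℕ} {v : ℕ} (hb : b ∈ seqsF k) (hv : v ∈ allowedF b) :
    ckF (b ++ [v]) = (if idxF b v < rkF b then ckF b - 1 else ckF b) ∧
    rkF (b ++ [v]) = idxF b v := by
  have hbne := seqs_ne k hb
  have hbd := seqs_bd k hb
  refine ⟨?_, rk_append hbne hbd hv⟩
  rw [ck_append hbne hbd hv]
  have hd := desc_iff hbne hbd hv
  by_cases h : idxF b v < rkF b
  · rw [if_pos h, if_neg (by tauto)]
  · rw [if_neg h, if_pos (by tauto)]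

lemma okState_all : ∀ k, ∀ b ∈ seqsF k, okState (ckF b) (rkF b) := by
  intro k
  induction k with
  | zero =>
    intro b hb
    simp only [seqsF, Finset.mem_singleton] at hb
    subst hb
    have h1 : ckF [0] = 3 := by decide
    have h2 : rkF [0] = 0 := by decide
    rw [h1, h2]; left; exact ⟨rfl, by omega⟩
  | succ k ih =>
    intro a ha
    simp only [seqsF, Finset.mem_biUnion, Finset.mem_image] at ha
    obtain ⟨b, hb, v, hv, rfl⟩ := ha
    have hok := ih b hb
    have hst := state_append hb hv
    have hilt := idx_lt_ck (seqs_ne k hb) (seqs_bd k hb) hv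
    rw [hst.1, hst.2]
    unfold okState at *
    by_cases h : idxF b v < rkF b <;> simp only [h, if_true, if_false] <;> omega

lemma card_filter_succ (k : ℕ) (Q : List ℕ → Prop) [DecidablePred Q] :
    ((seqsF (k+1)).filter Q).card
      = ∑ b ∈ seqsF k, ((allowedF b).filter (fun v => Q (b ++ [v]))).card := by
  show ((Finset.biUnion _ _).filter Q).card = _
  rw [Finset.filter_biUnion]
  rw [Finset.card_biUnion]
  · apply Finset.sum_congr rfl
    intro b _
    rw [Finset.filter_image]
    apply Finset.card_image_of_injOn
    intro u _ w _ h
    simpa using h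
  · intro x hx y hy hxy
    simp only [Finset.disjoint_left]
    intro a hax hay
    simp only [Finset.mem_filter, Finset.mem_image] at hax hay
    obtain ⟨⟨u, _, rfl⟩, _⟩ := hax
    obtain ⟨⟨w, _, hw⟩, _⟩ := hay
    apply hxy
    have := congrArg List.dropLast hw
    simpa using this.symm

lemma inner_card {k : ℕ} {b : List ℕ} (hb : b ∈ seqsF k) (c' r' : ℕ) :
    ((allowedF b).filter (fun v => ckF (b ++ [v]) = c' ∧ rkF (b ++ [v]) = r')).card
      = if ((if r' < rkF b then ckF b - 1 else ckF b) = c' ∧ r' < ckF b) then 1 else 0 := by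
  have hbne := seqs_ne k hb
  have hbd := seqs_bd k hb
  by_cases hC : (if r' < rkF b then ckF b - 1 else ckF b) = c'
  · have : (allowedF b).filter (fun v => ckF (b ++ [v]) = c' ∧ rkF (b ++ [v]) = r')
        = (allowedF b).filter (fun v => idxF b v = r') := by
      apply Finset.filter_congr
      intro v hv
      have hst := state_append hb hv
      rw [hst.1, hst.2]
      constructor
      · rintro ⟨_, rfl⟩; rfl
      · rintro rfl; exact ⟨hC, rfl⟩
    rw [this, fiber_card hbne hbd r']
    by_cases h2 : r' < ckF b <;> simp [h2, hC]
  · have : (allowedF b).filter (fun v => ckF (b ++ [v]) = c' ∧ rkF (b ++ [v]) = r')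
        = ∅ := by
      apply Finset.filter_eq_empty_iff.mpr
      intro v hv
      have hst := state_append hb hv
      rw [hst.1, hst.2]
      rintro ⟨h1, rfl⟩
      exact hC h1
    rw [this]
    simp [hC]

lemma cnt_succ (k c' r' : ℕ) :
    cnt (k+1) c' r' = ((seqsF k).filter (fun b =>
      (if r' < rkF b then ckF b - 1 else ckF b) = c' ∧ r' < ckF b)).card := by
  rw [cnt, card_filter_succ k (fun a => ckF a = c' ∧ rkF a = r')]
  rw [Finset.card_filter]
  apply Finset.sum_congr rfl
  intro b hb
  rw [inner_card hb c' r']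

lemma filter_st1 (k : ℕ) (P : List ℕ → Prop) [DecidablePred P] (c1 r1 : ℕ)
    (h : ∀ b ∈ seqsF k, P b ↔ (ckF b = c1 ∧ rkF b = r1)) :
    ((seqsF k).filter P).card = cnt k c1 r1 := by
  rw [Finset.filter_congr h]; rfl

lemma filter_st2 (k : ℕ) (P : List ℕ → Prop) [DecidablePred P] (c1 r1 c2 r2 : ℕ)
    (hne : ¬ (c1 = c2 ∧ r1 = r2))
    (h : ∀ b ∈ seqsF k, P b ↔ ((ckF b = c1 ∧ rkF b = r1) ∨ (ckF b = c2 ∧ rkF b = r2))) :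
    ((seqsF k).filter P).card = cnt k c1 r1 + cnt k c2 r2 := by
  rw [Finset.filter_congr h, Finset.filter_or, Finset.card_union_of_disjoint]
  · rfl
  · rw [Finset.disjoint_left]
    intro a h1 h2
    simp only [Finset.mem_filter] at h1 h2
    exact hne ⟨h1.2.1.symm.trans h2.2.1, h1.2.2.symm.trans h2.2.2⟩

lemma filter_st3 (k : ℕ) (P : List ℕ → Prop) [DecidablePred P] (c1 r1 c2 r2 c3 r3 : ℕ)
    (hne12 : ¬ (c1 = c2 ∧ r1 = r2)) (hne13 : ¬ (c1 = c3 ∧ r1 = r3))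
    (hne23 : ¬ (c2 = c3 ∧ r2 = r3))
    (h : ∀ b ∈ seqsF k, P b ↔ ((ckF b = c1 ∧ rkF b = r1) ∨ (ckF b = c2 ∧ rkF b = r2)
          ∨ (ckF b = c3 ∧ rkF b = r3))) :
    ((seqsF k).filter P).card = cnt k c1 r1 + cnt k c2 r2 + cnt k c3 r3 := by
  rw [Finset.filter_congr h, Finset.filter_or, Finset.filter_or,
    Finset.card_union_of_disjoint, Finset.card_union_of_disjoint]
  · exact (Nat.add_assoc _ _ _).symm
  · rw [Finset.disjoint_left]
    intro a h1 h2
    simp only [Finset.mem_filter] at h1 h2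
    exact hne23 ⟨h1.2.1.symm.trans h2.2.1, h1.2.2.symm.trans h2.2.2⟩
  · rw [Finset.disjoint_left]
    intro a h1 h2
    simp only [Finset.mem_filter, Finset.mem_union] at h1 h2
    rcases h2 with ⟨_, h2'⟩ | ⟨_, h2'⟩
    · exact hne12 ⟨h1.2.1.symm.trans h2'.1, h1.2.2.symm.trans h2'.2⟩
    · exact hne13 ⟨h1.2.1.symm.trans h2'.1, h1.2.2.symm.trans h2'.2⟩

lemma rec30 (k : ℕ) : cnt (k+1) 3 0 = cnt k 3 0 := by
  rw [cnt_succ]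
  apply filter_st1
  intro b hb
  have := okState_all k b hb
  unfold okState at this
  by_cases h : 0 < rkF b <;> simp only [h, if_true, if_false] <;> omega

lemma rec31 (k : ℕ) : cnt (k+1) 3 1 = cnt k 3 0 + cnt k 3 1 := by
  rw [cnt_succ]
  apply filter_st2 _ _ _ _ _ _ (by omega)
  intro b hb
  have := okState_all k b hb
  unfold okState at this
  by_cases h : 1 < rkF b <;> simp only [h, if_true, if_false] <;> omega

lemma rec32 (k : ℕ) : cnt (k+1) 3 2 = cnt k 3 0 + cnt k 3 1 + cnt k 3 2 := by
  rw [cnt_succ]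
  apply filter_st3 _ _ _ _ _ _ _ _ (by omega) (by omega) (by omega)
  intro b hb
  have := okState_all k b hb
  unfold okState at this
  by_cases h : 2 < rkF b <;> simp only [h, if_true, if_false] <;> omega

lemma rec20 (k : ℕ) : cnt (k+1) 2 0 = cnt k 3 1 + cnt k 3 2 + cnt k 2 0 := by
  rw [cnt_succ]
  apply filter_st3 _ _ _ _ _ _ _ _ (by omega) (by omega) (by omega)
  intro b hb
  have := okState_all k b hb
  unfold okState at this
  by_cases h : 0 < rkF b <;> simp only [h, if_true, if_false] <;> omega

lemma rec21 (k : ℕ) : cnt (k+1) 2 1 = cnt k 3 2 + cnt k 2 0 + cnt k 2 1 := by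
  rw [cnt_succ]
  apply filter_st3 _ _ _ _ _ _ _ _ (by omega) (by omega) (by omega)
  intro b hb
  have := okState_all k b hb
  unfold okState at this
  by_cases h : 1 < rkF b <;> simp only [h, if_true, if_false] <;> omega

lemma rec10 (k : ℕ) : cnt (k+1) 1 0 = cnt k 2 1 + cnt k 1 0 := by
  rw [cnt_succ]
  apply filter_st2 _ _ _ _ _ _ (by omega)
  intro b hb
  have := okState_all k b hb
  unfold okState at this
  by_cases h : 0 < rkF b <;> simp only [h, if_true, if_false] <;> omega

lemma cnt_closed : ∀ k : ℕ,
    cnt k 3 0 = 1 ∧ cnt k 3 1 = k ∧ cnt k 3 2 = (k+1).choose 2 ∧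
    cnt k 2 0 = k.choose 2 + (k+1).choose 3 ∧
    cnt k 2 1 = (k+1).choose 3 + k.choose 3 + (k+1).choose 4 ∧
    cnt k 1 0 = (k+1).choose 4 + k.choose 4 + (k+1).choose 5 := by
  intro k
  induction k with
  | zero =>
    refine ⟨by decide, by decide, by decide, by decide, by decide, by decide⟩
  | succ k ih =>
    obtain ⟨h1, h2, h3, h4, h5, h6⟩ := ih
    have p2 : (k+1+1).choose 2 = (k+1).choose 1 + (k+1).choose 2 := Nat.choose_succ_succ (k+1) 1
    have p2' : (k+1).choose 2 = k.choose 1 + k.choose 2 := Nat.choose_succ_succ k 1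
    have p3 : (k+1+1).choose 3 = (k+1).choose 2 + (k+1).choose 3 := Nat.choose_succ_succ (k+1) 2
    have p3' : (k+1).choose 3 = k.choose 2 + k.choose 3 := Nat.choose_succ_succ k 2
    have p4 : (k+1+1).choose 4 = (k+1).choose 3 + (k+1).choose 4 := Nat.choose_succ_succ (k+1) 3
    have p4' : (k+1).choose 4 = k.choose 3 + k.choose 4 := Nat.choose_succ_succ k 3
    have p5 : (k+1+1).choose 5 = (k+1).choose 4 + (k+1).choose 5 := Nat.choose_succ_succ (k+1) 4
    have p5' : (k+1).choose 5 = k.choose 4 + k.choose 5 := Nat.choose_succ_succ k 4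
    have c1 : (k+1).choose 1 = k + 1 := Nat.choose_one_right _
    have c1' : k.choose 1 = k := Nat.choose_one_right _
    refine ⟨?_, ?_, ?_, ?_, ?_, ?_⟩
    · rw [rec30, h1]
    · rw [rec31, h1, h2]; omega
    · rw [rec32, h1, h2, h3]; omega
    · rw [rec20, h2, h3, h4]; omega
    · rw [rec21, h3, h4, h5]; omega
    · rw [rec10, h5, h6]; omega

lemma total_card (k : ℕ) : (seqsF k).card =
    cnt k 3 0 + cnt k 3 1 + cnt k 3 2 + cnt k 2 0 + cnt k 2 1 + cnt k 1 0 := by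
  have key : ∀ b ∈ seqsF k, (1:ℕ) =
      (if ckF b = 3 ∧ rkF b = 0 then 1 else 0) + (if ckF b = 3 ∧ rkF b = 1 then 1 else 0)
      + (if ckF b = 3 ∧ rkF b = 2 then 1 else 0) + (if ckF b = 2 ∧ rkF b = 0 then 1 else 0)
      + (if ckF b = 2 ∧ rkF b = 1 then 1 else 0) + (if ckF b = 1 ∧ rkF b = 0 then 1 else 0) := by
    intro b hb
    have := okState_all k b hb
    unfold okState at this
    split_ifs <;> omega
  calc (seqsF k).card = ∑ b ∈ seqsF k, (1:ℕ) := by rw [Finset.card_eq_sum_ones]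
    _ = ∑ b ∈ seqsF k,
        ((if ckF b = 3 ∧ rkF b = 0 then 1 else 0) + (if ckF b = 3 ∧ rkF b = 1 then 1 else 0)
        + (if ckF b = 3 ∧ rkF b = 2 then 1 else 0) + (if ckF b = 2 ∧ rkF b = 0 then 1 else 0)
        + (if ckF b = 2 ∧ rkF b = 1 then 1 else 0) + (if ckF b = 1 ∧ rkF b = 0 then 1 else 0)) :=
      Finset.sum_congr rfl key
    _ = cnt k 3 0 + cnt k 3 1 + cnt k 3 2 + cnt k 2 0 + cnt k 2 1 + cnt k 1 0 := by
      simp only [Finset.sum_add_distrib, ← Finset.card_filter]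
      rfl

lemma total_formula (k : ℕ) : (seqsF k).card =
    (k+2).choose 2 + 2 * (k+1).choose 3 + k.choose 4 + (k+3).choose 5 := by
  obtain ⟨h1, h2, h3, h4, h5, h6⟩ := cnt_closed k
  rw [total_card, h1, h2, h3, h4, h5, h6]
  have p2 : (k+2).choose 2 = (k+1).choose 1 + (k+1).choose 2 := Nat.choose_succ_succ (k+1) 1
  have p3 : (k+3).choose 5 = (k+2).choose 4 + (k+2).choose 5 := Nat.choose_succ_succ (k+2) 4
  have p4 : (k+2).choose 4 = (k+1).choose 3 + (k+1).choose 4 := Nat.choose_succ_succ (k+1) 3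
  have p5 : (k+2).choose 5 = (k+1).choose 4 + (k+1).choose 5 := Nat.choose_succ_succ (k+1) 4
  have p6 : (k+1).choose 3 = k.choose 2 + k.choose 3 := Nat.choose_succ_succ k 2
  have p7 : (k+1).choose 2 = k.choose 1 + k.choose 2 := Nat.choose_succ_succ k 1
  have c1 : (k+1).choose 1 = k + 1 := Nat.choose_one_right _
  have c1' : k.choose 1 = k := Nat.choose_one_right _
  omega

theorem stmt7 (n : ℕ) (hn : 1 ≤ n) :
    Set.ncard {a : List ℕ | a.length = n ∧ IsPAsc 3 a ∧ a.Nodup} =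
      (n + 1).choose 2 + 2 * n.choose 3 + (n - 1).choose 4 + (n + 2).choose 5 := by
  obtain ⟨k, rfl⟩ : ∃ k, n = k + 1 := ⟨n - 1, by omega⟩
  have hset : {a : List ℕ | a.length = k + 1 ∧ IsPAsc 3 a ∧ a.Nodup} = ↑(seqsF k) := by
    ext a
    simp only [Set.mem_setOf_eq, Finset.mem_coe]
    constructor
    · rintro ⟨h1, h2, h3⟩
      exact mem_seqs_of_good k a h1 h2 h3
    · intro h
      obtain ⟨h1, h2, h3, _⟩ := seqs_spec k a h
      exact ⟨h1, h2, h3⟩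
  rw [hset, Set.ncard_coe_finset, total_formula]
  rw [show k + 1 + 1 = k + 2 from rfl, show k + 1 - 1 = k from rfl,
    show k + 1 + 2 = k + 3 from rfl]
end

section
/- For all n ≥ 1, the number of strictly increasing 3-ascent sequences of length n (equivalently, 3-ascent sequences with no descents and pairwise distinct entries) equals C(n+1, 2). -/
lemma ascN_of_chain : ∀ (l : List ℕ), l.Chain' (· < ·) → ascN l = l.length - 1
  | [], _ => rfl
  | [_], _ => rfl
  | a :: b :: t, h => by
    unfold List.Chain' at h
    rw [List.isChain_cons_cons] at h
    have ih := ascN_of_chain (b :: t) h.2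
    simp only [ascN, List.zip_cons_cons, List.tail_cons, List.countP_cons] at *
    simp [h.1, ih]

lemma ascN_take_of_chain (l : List ℕ) (h : l.Chain' (· < ·)) (i : ℕ) :
    ascN (l.take i) = min i l.length - 1 := by
  rw [ascN_of_chain _ (h.prefix (l.take_prefix i)), List.length_take]

def fseq (n p q : ℕ) : List ℕ :=
  List.ofFn (fun i : Fin n => i.val + (if p < i.val then 1 else 0) + (if q < i.val then 1 else 0))

lemma fseq_get (n p q : ℕ) (i : ℕ) (h : i < (fseq n p q).length) :
    (fseq n p q).get ⟨i, h⟩ = i + (if p < i then 1 else 0) + (if q < i then 1 else 0) := by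
  simp [fseq]

lemma fseq_length (n p q : ℕ) : (fseq n p q).length = n := by simp [fseq]

lemma fseq_chain (n p q : ℕ) : (fseq n p q).Chain' (· < ·) := by
  unfold List.Chain'
  rw [List.isChain_iff_getElem]
  intro i h
  show (fseq n p q).get ⟨i, by omega⟩ < (fseq n p q).get ⟨i + 1, h⟩
  rw [fseq_get, fseq_get]
  split_ifs <;> omega

lemma fseq_pasc (n p q : ℕ) (hn : 1 ≤ n) : IsPAsc 3 (fseq n p q) := by
  constructor
  · rw [List.head?_eq_getElem?]
    have h0 : 0 < (fseq n p q).length := by rw [fseq_length]; omega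
    rw [List.getElem?_eq_getElem h0]
    have := fseq_get n p q 0 h0
    simp only [List.get_eq_getElem] at this
    simp [this]
  · intro i hi
    rw [ascN_take_of_chain _ (fseq_chain n p q)]
    have hL : (fseq n p q).length = n := fseq_length n p q
    have hlt : i.val < n := by have := i.isLt; omega
    have hm : ↑i ⊓ (fseq n p q).length = ↑i := by omega
    rw [hm]
    have := fseq_get n p q i.val i.isLt
    simp only [List.get_eq_getElem] at this ⊢
    rw [this]
    split_ifs <;> omega

theorem stmt8 (n : ℕ) (hn : 1 ≤ n) :
    Set.ncard {a : List ℕ | a.length = n ∧ IsPAsc 3 a ∧ a.Chain' (· < ·)} =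
      (n + 1).choose 2 := by
  set T := ((Finset.range n) ×ˢ (Finset.range n)).filter (fun pq => pq.1 ≤ pq.2) with hT
  have hset : {a : List ℕ | a.length = n ∧ IsPAsc 3 a ∧ a.Chain' (· < ·)}
      = (fun pq : ℕ × ℕ => fseq n pq.1 pq.2) '' ↑T := by
    ext a
    simp only [Set.mem_setOf_eq, Set.mem_image, Finset.mem_coe, hT, Finset.mem_filter,
      Finset.mem_product, Finset.mem_range, Prod.exists]
    constructor
    · rintro ⟨hlen, ⟨hhead, hbound⟩, hchain⟩
      -- basic facts about the entries
      have hgd : ∀ i (h : i < n), a.getD i 0 = a.get ⟨i, hlen ▸ h⟩ := by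
        intro i h
        rw [List.getD_eq_getElem a 0 (hlen ▸ h)]
        rfl
      have hG0 : a.getD 0 0 = 0 := by
        rw [List.getD_eq_getElem?_getD, ← List.head?_eq_getElem?, hhead]
        rfl
      have hstep : ∀ i, i + 1 < n → a.getD i 0 < a.getD (i + 1) 0 := by
        intro i h
        rw [hgd i (by omega), hgd (i+1) h]
        exact List.isChain_iff_getElem.mp hchain i (by omega)
      have hub : ∀ i, 1 ≤ i → i < n → a.getD i 0 ≤ i + 2 := by
        intro i h1 h2
        have hb := hbound ⟨i, hlen ▸ h2⟩ h1
        rw [ascN_take_of_chain _ hchain] at hb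
        rw [hgd i h2]
        have hm : i ⊓ a.length = i := by omega
        rw [hm] at hb
        omega
      have hlb : ∀ i, i < n → i ≤ a.getD i 0 := by
        intro i
        induction i with
        | zero => omega
        | succ k ih =>
          intro h
          have := hstep k h
          have := ih (by omega)
          omega
      have hmono : ∀ j, j < n → ∀ i, i ≤ j → a.getD i 0 + (j - i) ≤ a.getD j 0 := by
        intro j
        induction j with
        | zero =>
          intro _ i hi
          interval_cases i
          omega
        | succ k ih =>
          intro hk i hi
          rcases Nat.eq_or_lt_of_le hi with h | h
          · subst h; omega
          · have h1 := hstep k hk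
            have h2 := ih (by omega) i (by omega)
            omega
      set p := Nat.findGreatest (fun i => a.getD i 0 = i) (n - 1) with hp_def
      set q := Nat.findGreatest (fun i => a.getD i 0 ≤ i + 1) (n - 1) with hq_def
      have hp_le : p ≤ n - 1 := Nat.findGreatest_le (n - 1)
      have hq_le : q ≤ n - 1 := Nat.findGreatest_le (n - 1)
      have hpq : p ≤ q :=
        Nat.findGreatest_mono (fun k hk => by omega) le_rfl
      have hPp : a.getD p 0 = p := by
        rw [hp_def]
        exact Nat.findGreatest_spec (P := fun i => a.getD i 0 = i) (Nat.zero_le _) hG0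
      have hPq : a.getD q 0 ≤ q + 1 := by
        rw [hq_def]
        exact Nat.findGreatest_spec (P := fun i => a.getD i 0 ≤ i + 1) (Nat.zero_le _)
          (by omega)
      have key : ∀ i, i < n →
          a.getD i 0 = i + (if p < i then 1 else 0) + (if q < i then 1 else 0) := by
        intro i hi
        have hlbi := hlb i hi
        rcases le_or_gt i p with h1 | h1
        · -- i ≤ p : value is i
          have hmp := hmono p (by omega) i h1
          have hvi : a.getD i 0 = i := by omega
          rw [hvi, if_neg (by omega), if_neg (by omega)]
          omega
        · rcases le_or_gt i q with h2 | h2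
          · -- p < i ≤ q : value is i + 1
            have hmq := hmono q (by omega) i h2
            have hne : ¬ (a.getD i 0 = i) :=
              Nat.findGreatest_is_greatest (P := fun j => a.getD j 0 = j)
                (by rw [← hp_def]; omega) (by omega)
            have hvi : a.getD i 0 = i + 1 := by omega
            rw [hvi, if_pos h1, if_neg (by omega)]
          · -- q < i : value is i + 2
            have hne : ¬ (a.getD i 0 ≤ i + 1) :=
              Nat.findGreatest_is_greatest (P := fun j => a.getD j 0 ≤ j + 1)
                (by rw [← hq_def]; omega) (by omega)
            have hu := hub i (by omega) hi
            have hvi : a.getD i 0 = i + 2 := by omega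
            rw [hvi, if_pos (by omega), if_pos h2]
      refine ⟨p, q, ⟨⟨by omega, by omega⟩, hpq⟩, ?_⟩
      apply List.ext_get (by rw [fseq_length, hlen])
      intro i h1 h2
      rw [fseq_get]
      have hi : i < n := by rw [fseq_length] at h1; exact h1
      have := key i hi
      rw [hgd i hi] at this
      rw [← this]
    · rintro ⟨p, q, ⟨⟨hp, hq⟩, hpq⟩, rfl⟩
      exact ⟨fseq_length n p q, fseq_pasc n p q hn, fseq_chain n p q⟩
  rw [hset, Set.ncard_image_of_injOn, Set.ncard_coe_finset]
  · -- cardinality of T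
    rw [hT, Finset.card_filter, Finset.sum_product_right]
    have h1 : ∀ q ∈ Finset.range n, (∑ p ∈ Finset.range n, if p ≤ q then 1 else 0) = q + 1 := by
      intro q hq
      simp only [Finset.mem_range] at hq
      rw [← Finset.card_filter]
      have : (Finset.range n).filter (fun p => p ≤ q) = Finset.range (q + 1) := by
        ext p; simp [Nat.lt_succ_iff]; omega
      simp [this]
    rw [Finset.sum_congr rfl h1]
    have g := Finset.sum_range_id_mul_two (n + 1)
    rw [Finset.sum_range_succ' (fun i => i) n] at g
    simp at g
    rw [Nat.choose_two_right]
    simp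
    omega
  · -- injectivity
    rintro ⟨p, q⟩ hpq ⟨p', q'⟩ hpq' hf
    simp only [hT, Finset.mem_coe, Finset.mem_filter, Finset.mem_product, Finset.mem_range] at hpq hpq'
    obtain ⟨⟨hp, hq⟩, hle⟩ := hpq
    obtain ⟨⟨hp', hq'⟩, hle'⟩ := hpq'
    simp only at hf
    have E : ∀ i, i < n →
        (i + (if p < i then 1 else 0) + (if q < i then 1 else 0) : ℕ) =
          i + (if p' < i then 1 else 0) + (if q' < i then 1 else 0) := by
      intro i hi
      have h1 : i < (fseq n p q).length := by rw [fseq_length]; exact hi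
      have h2 : i < (fseq n p' q').length := by rw [fseq_length]; exact hi
      rw [← fseq_get n p q i h1, ← fseq_get n p' q' i h2]
      simp only [List.get_eq_getElem, hf]
    have hpp : p = p' := by
      rcases Nat.lt_trichotomy p p' with h | h | h
      · have := E (p + 1) (by omega)
        split_ifs at this <;> omega
      · exact h
      · have := E (p' + 1) (by omega)
        split_ifs at this <;> omega
    have hqq : q = q' := by
      rcases Nat.lt_trichotomy q q' with h | h | h
      · have := E (q + 1) (by omega)
        split_ifs at this <;> omega
      · exact h
      · have := E (q' + 1) (by omega)
        split_ifs at this <;> omega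
    simp [hpp, hqq]
end

section
/- For all n ≥ 5, the number of 4-ascent sequences of length n avoiding the pattern 012 equals (2^(n-5)/3)·(n³ + 12n² + 29n + 6). -/
/-! ### Auxiliary development -/

/-- Lists of length `m`, entries `≤ r`, whose positive entries are weakly decreasing. -/
def Tset (r m : ℕ) : Set (List ℕ) :=
  {t | t.length = m ∧ (∀ x ∈ t, x ≤ r) ∧ t.Pairwise (fun a b => ¬(0 < a ∧ a < b))}

lemma Tset_zero (r : ℕ) : Tset r 0 = {([] : List ℕ)} := by
  ext t
  constructor
  · rintro ⟨h1, -, -⟩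
    simpa [List.length_eq_zero_iff] using h1
  · rintro rfl
    exact ⟨rfl, by simp, by simp⟩

lemma mem_Tset_cons {r m v : ℕ} {t : List ℕ} :
    (v :: t) ∈ Tset r (m + 1) ↔ v ≤ r ∧ t ∈ Tset (if v = 0 then r else v) m := by
  constructor
  · rintro ⟨h1, h2, h3⟩
    rw [List.pairwise_cons] at h3
    refine ⟨h2 v (by simp), ?_⟩
    by_cases hv : v = 0
    · subst hv
      simp only [if_pos rfl]
      exact ⟨by simpa using h1, fun x hx => h2 x (by simp [hx]), h3.2⟩
    · simp only [if_neg hv]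
      refine ⟨by simpa using h1, ?_, h3.2⟩
      intro x hx
      have := h3.1 x hx
      push_neg at this
      exact this (Nat.pos_of_ne_zero hv)
  · rintro ⟨hvr, h1, h2, h3⟩
    refine ⟨by simpa using h1, ?_, ?_⟩
    · intro x hx
      rcases List.mem_cons.mp hx with rfl | hx
      · exact hvr
      · by_cases hv : v = 0
        · simpa [hv] using h2 x hx
        · exact le_trans (by simpa [hv] using h2 x hx) hvr
    · rw [List.pairwise_cons]
      refine ⟨?_, h3⟩
      intro b hb
      by_cases hv : v = 0
      · simp [hv]
      · have : b ≤ v := by simpa [hv] using h2 b hb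
        rintro ⟨-, h⟩
        omega

lemma Tset_finite (r m : ℕ) : (Tset r m).Finite := by
  induction m with
  | zero => rw [Tset_zero]; exact Set.finite_singleton _
  | succ m ih =>
    have hsub : Tset r (m + 1) ⊆
        ⋃ v ∈ Finset.range (r + 1), (fun t => v :: t) '' Tset r m := by
      rintro t ⟨h1, h2, h3⟩
      rcases t with _ | ⟨v, t⟩
      · simp at h1
      · rw [List.pairwise_cons] at h3
        have hv : v ∈ Finset.range (r + 1) :=
          Finset.mem_range.mpr (Nat.lt_succ_of_le (h2 v (by simp)))
        exact Set.mem_biUnion hv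
          ⟨t, ⟨by simpa using h1, fun x hx => h2 x (by simp [hx]), h3.2⟩, rfl⟩
    exact Set.Finite.subset (Set.Finite.biUnion (Finset.range (r+1)).finite_toSet
      (fun v _ => ih.image _)) hsub

/-- decomposition of `Tset r (m+1)` by first letter -/
lemma Tset_succ_eq (r m : ℕ) :
    Tset r (m + 1) =
      ⋃ v ∈ Finset.range (r + 1), (fun t => v :: t) '' Tset (if v = 0 then r else v) m := by
  ext t
  simp only [Set.mem_iUnion, Finset.mem_range, Set.mem_image, exists_prop]
  constructor
  · intro ht
    rcases t with _ | ⟨v, t⟩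
    · exact absurd ht.1 (by simp)
    · rw [mem_Tset_cons] at ht
      exact ⟨v, Nat.lt_succ_of_le ht.1, t, ht.2, rfl⟩
  · rintro ⟨v, hv, t', ht', rfl⟩
    exact mem_Tset_cons.mpr ⟨Nat.lt_succ_iff.mp hv, ht'⟩

lemma ncard_biUnion {ι : Type*} [DecidableEq ι] (s : Finset ι) (f : ι → Set (List ℕ)) :
    (∀ i ∈ s, (f i).Finite) →
    (∀ i ∈ s, ∀ j ∈ s, i ≠ j → Disjoint (f i) (f j)) →
    (⋃ i ∈ s, f i).ncard = ∑ i ∈ s, (f i).ncard := by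
  induction s using Finset.induction with
  | empty => intro _ _; simp
  | @insert a s ha ih =>
    intro hfin hdisj
    have hfin2 : (⋃ i ∈ s, f i).Finite :=
      Set.Finite.biUnion s.finite_toSet (fun i hi => hfin i (Finset.mem_insert_of_mem hi))
    have hdj : Disjoint (f a) (⋃ i ∈ s, f i) := by
      rw [Set.disjoint_iUnion_right]
      intro i
      rw [Set.disjoint_iUnion_right]
      intro hi
      exact hdisj a (Finset.mem_insert_self a s) i (Finset.mem_insert_of_mem hi)
        (by rintro rfl; exact ha hi)
    rw [Finset.set_biUnion_insert, Finset.sum_insert ha,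
      Set.ncard_union_eq hdj (hfin a (Finset.mem_insert_self a s)) hfin2,
      ih (fun i hi => hfin i (Finset.mem_insert_of_mem hi))
        (fun i hi j hj hij =>
          hdisj i (Finset.mem_insert_of_mem hi) j (Finset.mem_insert_of_mem hj) hij)]

/-- counting function -/
noncomputable def gcard (r m : ℕ) : ℕ := (Tset r m).ncard

lemma gcard_zero (r : ℕ) : gcard r 0 = 1 := by
  rw [gcard, Tset_zero, Set.ncard_singleton]

lemma gcard_succ (r m : ℕ) :
    gcard r (m + 1) = ∑ v ∈ Finset.range (r + 1), gcard (if v = 0 then r else v) m := by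
  rw [gcard, Tset_succ_eq r m, ncard_biUnion]
  · refine Finset.sum_congr rfl fun v _ => ?_
    rw [Set.ncard_image_of_injective _ (List.cons_injective)]
    rfl
  · intro i _
    exact (Tset_finite _ _).image _
  · intro i _ j _ hij
    rw [Set.disjoint_left]
    rintro x ⟨t, -, rfl⟩ ⟨t', -, h⟩
    exact hij (by injection h with h1 _; exact h1.symm)

lemma gcard_one (m : ℕ) : gcard 1 m = 2 ^ m := by
  induction m with
  | zero => simp [gcard_zero]
  | succ m ih =>
    rw [gcard_succ 1 m]
    simp only [Finset.sum_range_succ, Finset.sum_range_zero]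
    norm_num
    zify at ih ⊢
    linear_combination 2 * ih

lemma gcard_two (m : ℕ) : 2 * gcard 2 m = 2 ^ m * (m + 2) := by
  induction m with
  | zero => simp [gcard_zero]
  | succ m ih =>
    rw [gcard_succ 2 m]
    simp only [Finset.sum_range_succ, Finset.sum_range_zero]
    norm_num
    have h1 := gcard_one m
    zify at ih h1 ⊢
    linear_combination 2 * ih + 2 * h1

lemma gcard_three (m : ℕ) : 8 * gcard 3 m = 2 ^ m * (m ^ 2 + 7 * m + 8) := by
  induction m with
  | zero => simp [gcard_zero]
  | succ m ih =>
    rw [gcard_succ 3 m]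
    simp only [Finset.sum_range_succ, Finset.sum_range_zero]
    norm_num
    have h1 := gcard_one m
    have h2 := gcard_two m
    zify at ih h1 h2 ⊢
    linear_combination 2 * ih + 8 * h1 + 4 * h2

lemma gcard_four (m : ℕ) : 48 * gcard 4 m = 2 ^ m * (m ^ 3 + 15 * m ^ 2 + 56 * m + 48) := by
  induction m with
  | zero => simp [gcard_zero]
  | succ m ih =>
    rw [gcard_succ 4 m]
    simp only [Finset.sum_range_succ, Finset.sum_range_zero]
    norm_num
    have h1 := gcard_one m
    have h2 := gcard_two m
    have h3 := gcard_three m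
    zify at ih h1 h2 h3 ⊢
    linear_combination 2 * ih + 48 * h1 + 24 * h2 + 6 * h3

lemma ascN_of_all_zero {l : List ℕ} (h : ∀ x ∈ l, x = 0) : ascN l = 0 := by
  rw [ascN, List.countP_eq_zero]
  intro q hq
  have h1 := List.of_mem_zip hq
  have hq1 : q.1 = 0 := h (q.1) h1.1
  have hq2 : q.2 = 0 := h (q.2) (List.mem_of_mem_tail h1.2)
  simp [hq1, hq2]

/-- Characterization of the counted set. -/
lemma main_set_eq (n : ℕ) (hn : 1 ≤ n) :
    {a : List ℕ | a.length = n ∧ IsPAsc 4 a ∧ Avoids012 a} =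
      (fun t => 0 :: t) '' Tset 4 (n - 1) := by
  ext a
  simp only [Set.mem_setOf_eq, Set.mem_image]
  constructor
  · rintro ⟨hlen, ⟨hhead, hbound⟩, havoid⟩
    rcases a with _ | ⟨a0, t⟩
    · simp at hhead
    · have ha0 : a0 = 0 := by simpa using hhead
      subst ha0
      -- pairwise condition on the whole list
      have hpw : ∀ i j : Fin (0 :: t).length, i < j →
          ¬(0 < (0 :: t).get i ∧ (0 :: t).get i < (0 :: t).get j) := by
        rintro i j hij ⟨hi0, hij2⟩
        have hipos : (0 : ℕ) < i.val := by
          rcases Nat.eq_zero_or_pos i.val with h | h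
          · have : i = (⟨0, by simp⟩ : Fin (0 :: t).length) := Fin.ext h
            rw [this] at hi0
            simp at hi0
          · exact h
        exact havoid ⟨0, by simp⟩ i j (Fin.lt_def.mpr hipos) hij
          ⟨by simpa using hi0, hij2⟩
      -- all entries are at most 4
      have hle4 : ∀ i : Fin (0 :: t).length, (0 :: t).get i ≤ 4 := by
        by_contra hcon
        push_neg at hcon
        obtain ⟨i0, hi0⟩ := hcon
        have hex : ∃ k : ℕ, ∃ h : k < (0 :: t).length, 4 < (0 :: t).get ⟨k, h⟩ :=
          ⟨i0.val, i0.isLt, by simpa using hi0⟩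
        classical
        set p := Nat.find hex with hpdef
        obtain ⟨hp, hp4⟩ : ∃ h : p < (0 :: t).length, 4 < (0 :: t).get ⟨p, h⟩ :=
          Nat.find_spec hex
        have hmin : ∀ j, j < p → ¬ ∃ h : j < (0 :: t).length, 4 < (0 :: t).get ⟨j, h⟩ :=
          fun j hj => Nat.find_min hex hj
        -- entries before p are all zero
        have hzero : ∀ j : ℕ, j < p → ∀ h : j < (0 :: t).length, (0 :: t).get ⟨j, h⟩ = 0 := by
          intro j hj h
          have hjle : (0 :: t).get ⟨j, h⟩ ≤ 4 := by
            by_contra hc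
            push_neg at hc
            exact (hmin j hj) ⟨h, hc⟩
          by_contra hne
          exact hpw ⟨j, h⟩ ⟨p, hp⟩ (by simpa [Fin.lt_def] using hj)
            ⟨Nat.pos_of_ne_zero hne, by omega⟩
        have hp1 : 1 ≤ p := by
          rcases Nat.eq_zero_or_pos p with h | h
          · exfalso
            rw [hpdef] at h
            obtain ⟨hh, h4⟩ := (Nat.find_eq_zero hex).mp h
            simp at h4
          · exact h
        have hasc : ascN ((0 :: t).take p) = 0 := by
          apply ascN_of_all_zero
          intro x hx
          rw [List.mem_take_iff_getElem] at hx
          obtain ⟨i, hi, hxi⟩ := hx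
          rw [← hxi]
          have hi2 : i < (0 :: t).length := by omega
          have hget : (0 :: t)[i] = (0 :: t).get ⟨i, hi2⟩ := rfl
          rw [hget]
          exact hzero i (by omega) hi2
        have := hbound ⟨p, hp⟩ hp1
        rw [hasc] at this
        omega
      refine ⟨t, ⟨?_, ?_, ?_⟩, rfl⟩
      · simp only [List.length_cons] at hlen
        omega
      · intro x hx
        obtain ⟨i, rfl⟩ := List.mem_iff_get.mp hx
        have := hle4 ⟨i.val + 1, by simpa using Nat.succ_lt_succ i.isLt⟩
        simpa using this
      · rw [List.pairwise_iff_get]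
        intro i j hij
        have := hpw ⟨i.val + 1, by simpa using Nat.succ_lt_succ i.isLt⟩
          ⟨j.val + 1, by simpa using Nat.succ_lt_succ j.isLt⟩
          (by exact Nat.succ_lt_succ hij)
        exact this
  · rintro ⟨t, ⟨hlen, hle, hpw⟩, rfl⟩
    have hlen' : (0 :: t).length = n := by
      simp only [List.length_cons]
      omega
    refine ⟨hlen', ⟨rfl, ?_⟩, ?_⟩
    · intro i _
      have h4 : (0 :: t).get i ≤ 4 := by
        rcases i with ⟨iv, hiv⟩
        rcases iv with _ | iv
        · simp
        · have hit : iv < t.length := by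
            simp only [List.length_cons] at hiv
            omega
          have : (0 :: t).get ⟨iv + 1, hiv⟩ = t.get ⟨iv, hit⟩ := rfl
          rw [this]
          exact hle _ (List.get_mem t ⟨iv, hit⟩)
      exact le_trans h4 (Nat.le_add_right 4 _)
    · intro i j k hij hjk
      rintro ⟨h1, h2⟩
      rcases j with ⟨jv, hjv⟩
      rcases k with ⟨kv, hkv⟩
      simp only [Fin.lt_def] at hij hjk
      obtain ⟨jj, rfl⟩ : ∃ x, jv = x + 1 := ⟨jv - 1, by omega⟩
      obtain ⟨kk, rfl⟩ : ∃ x, kv = x + 1 := ⟨kv - 1, by omega⟩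
      have hjt : jj < t.length := by
        simp only [List.length_cons] at hjv
        omega
      have hkt : kk < t.length := by
        simp only [List.length_cons] at hkv
        omega
      have hj : (0 :: t).get ⟨jj + 1, hjv⟩ = t.get ⟨jj, hjt⟩ := rfl
      have hk : (0 :: t).get ⟨kk + 1, hkv⟩ = t.get ⟨kk, hkt⟩ := rfl
      rw [hj] at h1 h2
      rw [hk] at h2
      exact List.pairwise_iff_get.mp hpw ⟨jj, hjt⟩ ⟨kk, hkt⟩
        (by simp only [Fin.lt_def]; omega)
        ⟨lt_of_le_of_lt (Nat.zero_le _) h1, h2⟩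

theorem stmt13 (n : ℕ) (hn : 5 ≤ n) :
    3 * Set.ncard {a : List ℕ | a.length = n ∧ IsPAsc 4 a ∧ Avoids012 a} =
      2 ^ (n - 5) * (n ^ 3 + 12 * n ^ 2 + 29 * n + 6) := by
  obtain ⟨k, rfl⟩ : ∃ k, n = k + 5 := ⟨n - 5, by omega⟩
  rw [main_set_eq (k + 5) (by omega)]
  rw [Set.ncard_image_of_injective _ (List.cons_injective)]
  have h4 := gcard_four (k + 4)
  have hm : k + 5 - 1 = k + 4 := by omega
  rw [hm]
  have hk5 : k + 5 - 5 = k := by omega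
  rw [hk5]
  have hgoal : 48 * gcard 4 (k + 4) =
      16 * (2 ^ k * ((k + 5) ^ 3 + 12 * (k + 5) ^ 2 + 29 * (k + 5) + 6)) := by
    rw [h4, pow_add]
    ring
  have h48 : 48 * gcard 4 (k + 4) = 16 * (3 * gcard 4 (k + 4)) := by ring
  rw [h48] at hgoal
  have := Nat.eq_of_mul_eq_mul_left (by norm_num : 0 < 16) hgoal
  exact this
end
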